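/- Let a > 0 and b > 0, and set c = √(a² + 2ab), A = a + b + c and B = b/A. For a nonnegative integer k define the Hermite function h_k : ℝ → ℝ by h_k(x) = (2c)^{1/4}·exp(−c·x²)·H_k(√(2c)·x), where H_k(x) = (2^k·k!·√π)^{−1/2}·(−1)^k·exp(x²)·(d^k/dx^k)exp(−x²) is the normalized physicists' Hermite polynomial. Then for every integer d ≥ 1, every multi-index α = (α₁,…,α_d) ∈ ℕ^d, and every s' ∈ ℝ^d, ∫_{ℝ^d} exp(−a‖s‖₂² − a‖s'‖₂² − b‖s − s'‖₂²)·∏_{i=1}^d h_{α_i}(s_i) ds = (π/A)^{d/2}·B^{|α|}·∏_{i=1}^d h_{α_i}(s'_i), where |α| = α₁ + ⋯ + α_d. In particular, ∏_{i=1}^d h_{α_i}(s_i) is an eigenfunction, with eigenvalue (π/A)^{d/2}·B^{|α|}, of the integral operator with kernel κ(s, s') = exp(−a‖s‖₂² − a‖s'‖₂² − b‖s − s'‖₂²) on ℝ^d. -/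

import Mathlib

open MeasureTheory

/-- The normalized physicists' Hermite polynomial (as a function):
`H_k(x) = (2^k k! √π)^{-1/2} (-1)^k exp(x²) (d^k/dx^k) exp(-x²)`. -/
noncomputable def hermiteNorm (k : ℕ) (x : ℝ) : ℝ :=
  ((2 ^ k * (k.factorial : ℝ) * Real.sqrt Real.pi) ^ (-(1 : ℝ) / 2)) * (-1) ^ k *
    Real.exp (x ^ 2) * iteratedDeriv k (fun t => Real.exp (-t ^ 2)) x

/-- The Hermite eigenfunction `h_k(x) = (2c)^{1/4} exp(-c x²) H_k(√(2c) x)`. -/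
noncomputable def hermiteFun (c : ℝ) (k : ℕ) (x : ℝ) : ℝ :=
  (2 * c) ^ ((1 : ℝ) / 4) * Real.exp (-c * x ^ 2) * hermiteNorm k (Real.sqrt (2 * c) * x)

open Polynomial Filter Topology

namespace MySE

lemma integrable_pow_gauss {b : ℝ} (hb : 0 < b) (n : ℕ) :
    Integrable fun x : ℝ => x ^ n * Real.exp (-b * x ^ 2) := by
  have h := integrable_rpow_mul_exp_neg_mul_sq hb (s := (n : ℝ)) (by
    have : (0:ℝ) ≤ n := Nat.cast_nonneg n
    linarith)
  simpa [Real.rpow_natCast] using h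

lemma integrable_poly_gauss0 (q : Polynomial ℝ) :
    Integrable fun x : ℝ => q.eval x * Real.exp (-x ^ 2) := by
  induction q using Polynomial.induction_on' with
  | add f g hf hg =>
      simpa [add_mul] using hf.fun_add hg
  | monomial n a =>
      have h := (integrable_pow_gauss one_pos n).const_mul a
      refine h.congr ?_
      filter_upwards with x
      simp [eval_monomial, mul_assoc]

lemma integrable_poly_gauss (p : Polynomial ℝ) (w : ℝ) :
    Integrable fun x : ℝ => p.eval x * Real.exp (-(x - w) ^ 2) := by
  have h := (integrable_poly_gauss0 (p.comp (X + C w))).comp_sub_right w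
  refine h.congr ?_
  filter_upwards with x
  simp [eval_comp]

lemma tendsto_pow_gauss_atTop (n : ℕ) :
    Tendsto (fun t : ℝ => t ^ n * Real.exp (-t ^ 2)) atTop (𝓝 0) := by
  have h := (tendsto_rpow_mul_exp_neg_mul_atTop_nhds_zero ((n : ℝ) / 2) 1 one_pos).comp
      (tendsto_pow_atTop (two_ne_zero (α := ℕ)))
  apply h.congr'
  filter_upwards [eventually_gt_atTop (0 : ℝ)] with t ht
  have h1 : ((t ^ 2 : ℝ)) ^ ((n : ℝ) / 2) = t ^ n := by
    rw [← Real.rpow_natCast t 2, ← Real.rpow_mul ht.le,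
      show ((2:ℕ):ℝ) * ((n:ℝ)/2) = (n:ℝ) by push_cast; ring, Real.rpow_natCast]
  simp [Function.comp, h1]

lemma tendsto_poly_gauss_atTop0 (p : Polynomial ℝ) :
    Tendsto (fun t : ℝ => p.eval t * Real.exp (-t ^ 2)) atTop (𝓝 0) := by
  induction p using Polynomial.induction_on' with
  | add f g hf hg =>
      have := hf.add hg
      rw [add_zero] at this
      exact this.congr (by intro x; simp [add_mul])
  | monomial n a =>
      have := (tendsto_pow_gauss_atTop n).const_mul a
      rw [mul_zero] at this
      exact this.congr (by intro x; simp [eval_monomial, mul_assoc])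

lemma tendsto_poly_gauss_atBot0 (p : Polynomial ℝ) :
    Tendsto (fun t : ℝ => p.eval t * Real.exp (-t ^ 2)) atBot (𝓝 0) := by
  have h := (tendsto_poly_gauss_atTop0 (p.comp (-X))).comp tendsto_neg_atBot_atTop
  exact h.congr (by intro x; simp [Function.comp, eval_comp])

lemma tendsto_poly_gauss_atTop (p : Polynomial ℝ) (w : ℝ) :
    Tendsto (fun x : ℝ => p.eval x * Real.exp (-(x - w) ^ 2)) atTop (𝓝 0) := by
  have h := (tendsto_poly_gauss_atTop0 (p.comp (X + C w))).comp
      (tendsto_atTop_add_const_right atTop (-w) tendsto_id)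
  exact h.congr (by intro x; simp [Function.comp, eval_comp, sub_eq_add_neg])

lemma tendsto_poly_gauss_atBot (p : Polynomial ℝ) (w : ℝ) :
    Tendsto (fun x : ℝ => p.eval x * Real.exp (-(x - w) ^ 2)) atBot (𝓝 0) := by
  have h := (tendsto_poly_gauss_atBot0 (p.comp (X + C w))).comp
      (tendsto_atBot_add_const_right atBot (-w) tendsto_id)
  exact h.congr (by intro x; simp [Function.comp, eval_comp, sub_eq_add_neg])

lemma integral_deriv_eq_zero' (F F' : ℝ → ℝ) (hd : ∀ x, HasDerivAt F (F' x) x)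
    (hi : Integrable F') (ht : Tendsto F atTop (𝓝 0)) (hb : Tendsto F atBot (𝓝 0)) :
    ∫ x, F' x = 0 := by
  have h1 : ∫ x in Set.Iic (0:ℝ), F' x = F 0 - 0 :=
    integral_Iic_of_hasDerivAt_of_tendsto' (fun x _ => hd x) hi.integrableOn hb
  have h2 : ∫ x in Set.Ioi (0:ℝ), F' x = 0 - F 0 :=
    integral_Ioi_of_hasDerivAt_of_tendsto' (fun x _ => hd x) hi.integrableOn ht
  rw [← intervalIntegral.integral_Iic_add_Ioi (b := (0:ℝ)) hi.integrableOn hi.integrableOn, h1, h2]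
  ring

/-- The integral of polynomial × gaussian. -/
noncomputable def J (w : ℝ) (p : Polynomial ℝ) : ℝ :=
  ∫ x : ℝ, p.eval x * Real.exp (-(x - w) ^ 2)

lemma J_zero (w : ℝ) : J w 0 = 0 := by simp [J]

lemma J_one (w : ℝ) : J w 1 = Real.sqrt Real.pi := by
  have h : (∫ x : ℝ, Real.exp (-(x - w) ^ 2)) = ∫ x : ℝ, Real.exp (-1 * x ^ 2) := by
    rw [← integral_sub_right_eq_self (fun x : ℝ => Real.exp (-1 * x ^ 2)) w]
    norm_num
  simp only [J, eval_one, one_mul, h, integral_gaussian]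
  norm_num

lemma J_sub (w : ℝ) (p q : Polynomial ℝ) : J w (p - q) = J w p - J w q := by
  simp only [J, eval_sub, sub_mul]
  exact integral_sub (integrable_poly_gauss p w) (integrable_poly_gauss q w)

lemma J_add (w : ℝ) (p q : Polynomial ℝ) : J w (p + q) = J w p + J w q := by
  simp only [J, eval_add, add_mul]
  exact integral_add (integrable_poly_gauss p w) (integrable_poly_gauss q w)

lemma J_Cmul (w : ℝ) (c : ℝ) (p : Polynomial ℝ) : J w (C c * p) = c * J w p := by
  simp only [J, eval_mul, eval_C, mul_assoc]
  exact integral_const_mul c _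

lemma J_deriv_zero (w : ℝ) (p : Polynomial ℝ) :
    J w (derivative p - C 2 * (X - C w) * p) = 0 := by
  have hd : ∀ x : ℝ, HasDerivAt (fun x => p.eval x * Real.exp (-(x - w) ^ 2))
      ((derivative p - C 2 * (X - C w) * p).eval x * Real.exp (-(x - w) ^ 2)) x := by
    intro x
    have h1 : HasDerivAt (fun x : ℝ => -(x - w) ^ 2) (-(2 * (x - w))) x := by
      have := (((hasDerivAt_id x).sub_const w).fun_pow 2).fun_neg
      simpa using this
    have h2 := h1.exp
    have h3 := (p.hasDerivAt x).fun_mul h2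
    refine h3.congr_deriv ?_
    simp only [eval_sub, eval_mul, eval_C, eval_X]
    ring
  exact integral_deriv_eq_zero' _ _ hd (integrable_poly_gauss _ w)
    (tendsto_poly_gauss_atTop _ w) (tendsto_poly_gauss_atBot _ w)

lemma J_Xmul (w : ℝ) (p : Polynomial ℝ) :
    J w (X * p) = (1 / 2) * J w (derivative p) + w * J w p := by
  have h0 := J_deriv_zero w p
  rw [J_sub] at h0
  have h1 : J w (derivative p) = J w (C 2 * (X - C w) * p) := by linarith
  have h2 : (X : Polynomial ℝ) * p = C (1/2) * (C 2 * (X - C w) * p) + C w * p := by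
    have : (C (1/2 : ℝ)) * C 2 = 1 := by rw [← C_mul]; norm_num
    calc (X : Polynomial ℝ) * p = (C (1/2:ℝ) * C 2) * ((X - C w) * p) + C w * p := by
          rw [this]; ring
      _ = C (1/2) * (C 2 * (X - C w) * p) + C w * p := by ring
  rw [h2, J_add, J_Cmul, J_Cmul, ← h1]

lemma derivative_hermite (n : ℕ) :
    derivative (hermite (n + 1)) = C ((n : ℤ) + 1) * hermite n := by
  induction n with
  | zero => simp [hermite_one, hermite_zero]
  | succ n ih =>
      rw [hermite_succ (n + 1), derivative_sub, derivative_mul, derivative_X, one_mul, ih,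
        derivative_mul, derivative_C, zero_mul, zero_add, hermite_succ n]
      push_cast
      simp only [map_add, map_ofNat, map_one, map_natCast]
      ring

/-- The scaled real hermite polynomial: `eval x (Hr γ k) = He_k (γ x)`. -/
noncomputable def Hr (γ : ℝ) (k : ℕ) : Polynomial ℝ :=
  ((hermite k).map (Int.castRingHom ℝ)).comp (C γ * X)

lemma eval_Hr (γ : ℝ) (k : ℕ) (x : ℝ) :
    (Hr γ k).eval x = aeval (γ * x) (hermite k) := by
  simp [Hr, eval_comp, aeval_def, eval₂_eq_eval_map]

lemma Hr_zero (γ : ℝ) : Hr γ 0 = 1 := by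
  simp [Hr, hermite_zero]

lemma Hr_one (γ : ℝ) : Hr γ 1 = C γ * X := by
  simp [Hr, hermite_one]

lemma Hr_succ_succ (γ : ℝ) (k : ℕ) :
    Hr γ (k + 2) = C γ * (X * Hr γ (k + 1)) - C ((k : ℝ) + 1) * Hr γ k := by
  have h : hermite (k + 2) = X * hermite (k + 1) - C ((k : ℤ) + 1) * hermite k := by
    rw [hermite_succ (k + 1), derivative_hermite]
  simp only [Hr, h, Polynomial.map_sub, Polynomial.map_mul, Polynomial.map_X, map_C, sub_comp,
    mul_comp, X_comp, C_comp]
  simp only [eq_intCast, Int.cast_add, Int.cast_one, Int.cast_natCast]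
  ring

lemma derivative_Hr (γ : ℝ) (k : ℕ) :
    derivative (Hr γ (k + 1)) = C (γ * ((k : ℝ) + 1)) * Hr γ k := by
  simp only [Hr, derivative_comp, derivative_map, derivative_hermite, derivative_mul,
    derivative_C, derivative_X, zero_mul, mul_one, zero_add, Polynomial.map_mul, map_C,
    mul_comp, C_comp]
  simp only [eq_intCast, Int.cast_add, Int.cast_one, Int.cast_natCast]
  rw [← mul_assoc, ← C_mul]

lemma aeval_hermite_succ_succ (k : ℕ) (u : ℝ) :
    (aeval u (hermite (k + 2)) : ℝ)
      = u * aeval u (hermite (k + 1)) - ((k : ℝ) + 1) * aeval u (hermite k) := by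
  rw [hermite_succ (k + 1), derivative_hermite]
  simp only [map_sub, map_mul, aeval_X, aeval_C]
  push_cast
  ring

lemma herm_int (γ β : ℝ) (hβ : 0 < β) (hβ2 : β ^ 2 = 1 - γ ^ 2 / 2) (k : ℕ) (w : ℝ) :
    J w (Hr γ k) = Real.sqrt Real.pi * β ^ k * aeval (γ * w / β) (hermite k) := by
  have hβ0 : β ≠ 0 := ne_of_gt hβ
  induction k using Nat.twoStepInduction generalizing w with
  | zero => simp [Hr_zero, J_one, hermite_zero]
  | one =>
      have hX : J w (X : Polynomial ℝ) = w * Real.sqrt Real.pi := by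
        have h := J_Xmul w 1
        simpa [J_one, J_zero] using h
      rw [Hr_one, J_Cmul, hX, hermite_one, aeval_X]
      field_simp
  | more k ih0 ih1 =>
      rw [Hr_succ_succ, J_sub, J_Cmul, J_Cmul, J_Xmul, derivative_Hr, J_Cmul,
        ih0 w, ih1 w, aeval_hermite_succ_succ]
      have key : β ^ (k + 2) * (γ * w / β) = γ * w * β ^ (k + 1) := by
        field_simp
        ring
      linear_combination (-(Real.sqrt Real.pi * (aeval (γ * w / β) (hermite (k + 1)) : ℝ))) * key
        + (((k:ℝ) + 1) * Real.sqrt Real.pi * β ^ k * (aeval (γ * w / β) (hermite k) : ℝ)) * hβ2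

lemma herm_int' (γ β : ℝ) (hβ : 0 < β) (hβ2 : β ^ 2 = 1 - γ ^ 2 / 2) (k : ℕ) (w : ℝ) :
    ∫ u : ℝ, Real.exp (-(u - w) ^ 2) * (aeval (γ * u) (hermite k) : ℝ)
      = Real.sqrt Real.pi * β ^ k * aeval (γ * w / β) (hermite k) := by
  rw [← herm_int γ β hβ hβ2 k w]
  unfold J
  congr 1
  funext u
  rw [eval_Hr, mul_comm]

lemma gauss_contDiff (k : ℕ) : ContDiff ℝ k (fun y : ℝ => Real.exp (-(y ^ 2 / 2))) := by
  exact (Real.contDiff_exp.of_le le_top).comp (((contDiff_id.pow 2).div_const 2).neg)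

lemma iter_gauss (k : ℕ) (x : ℝ) :
    iteratedDeriv k (fun t : ℝ => Real.exp (-t ^ 2)) x
      = (Real.sqrt 2) ^ k * ((-1 : ℝ) ^ k * aeval (Real.sqrt 2 * x) (hermite k)
          * Real.exp (-x ^ 2)) := by
  have hfun : (fun t : ℝ => Real.exp (-t ^ 2))
      = fun t : ℝ => Real.exp (-((Real.sqrt 2 * t) ^ 2 / 2)) := by
    funext t
    congr 1
    rw [mul_pow, Real.sq_sqrt (by norm_num : (0:ℝ) ≤ 2)]
    ring
  have hexp2 : -((Real.sqrt 2 * x) ^ 2 / 2) = -x ^ 2 := by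
    rw [mul_pow, Real.sq_sqrt (by norm_num : (0:ℝ) ≤ 2)]
    ring
  calc iteratedDeriv k (fun t : ℝ => Real.exp (-t ^ 2)) x
      = iteratedDeriv k (fun t : ℝ => Real.exp (-((Real.sqrt 2 * t) ^ 2 / 2))) x := by
        rw [hfun]
    _ = (Real.sqrt 2) ^ k
          * iteratedDeriv k (fun y : ℝ => Real.exp (-(y ^ 2 / 2))) (Real.sqrt 2 * x) :=
        congrFun (iteratedDeriv_comp_const_mul (gauss_contDiff k) (Real.sqrt 2)) x
    _ = (Real.sqrt 2) ^ k
          * deriv^[k] (fun y : ℝ => Real.exp (-(y ^ 2 / 2))) (Real.sqrt 2 * x) := by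
        rw [iteratedDeriv_eq_iterate]
    _ = (Real.sqrt 2) ^ k * ((-1 : ℝ) ^ k * aeval (Real.sqrt 2 * x) (hermite k)
          * Real.exp (-((Real.sqrt 2 * x) ^ 2 / 2))) := by
        rw [Polynomial.deriv_gaussian_eq_hermite_mul_gaussian]
    _ = _ := by rw [hexp2]

lemma hermiteNorm_eq (k : ℕ) (x : ℝ) :
    hermiteNorm k x = ((2 ^ k * (k.factorial : ℝ) * Real.sqrt Real.pi) ^ (-(1 : ℝ) / 2)) *
      (Real.sqrt 2) ^ k * (aeval (Real.sqrt 2 * x) (hermite k) : ℝ) := by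
  rw [hermiteNorm, iter_gauss]
  have e1 : Real.exp (x ^ 2) * Real.exp (-x ^ 2) = 1 := by
    rw [← Real.exp_add]; simp
  have e2 : ((-1 : ℝ)) ^ k * (-1) ^ k = 1 := by
    rw [← mul_pow]; norm_num
  set N := ((2 ^ k * (k.factorial : ℝ) * Real.sqrt Real.pi) ^ (-(1 : ℝ) / 2))
  set A := (aeval (Real.sqrt 2 * x) (hermite k) : ℝ)
  calc N * (-1) ^ k * Real.exp (x ^ 2)
        * ((Real.sqrt 2) ^ k * ((-1 : ℝ) ^ k * A * Real.exp (-x ^ 2)))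
      = N * (Real.sqrt 2) ^ k * A
          * (((-1 : ℝ) ^ k * (-1) ^ k) * (Real.exp (x ^ 2) * Real.exp (-x ^ 2))) := by ring
    _ = N * (Real.sqrt 2) ^ k * A := by rw [e1, e2]; ring

lemma oneD (a b : ℝ) (ha : 0 < a) (hb : 0 < b) (k : ℕ) (y : ℝ) :
    ∫ x : ℝ, Real.exp (-a * x ^ 2 - a * y ^ 2 - b * (x - y) ^ 2)
        * hermiteFun (Real.sqrt (a ^ 2 + 2 * a * b)) k x
      = Real.sqrt (Real.pi / (a + b + Real.sqrt (a ^ 2 + 2 * a * b)))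
        * (b / (a + b + Real.sqrt (a ^ 2 + 2 * a * b))) ^ k
        * hermiteFun (Real.sqrt (a ^ 2 + 2 * a * b)) k y := by
  set c : ℝ := Real.sqrt (a ^ 2 + 2 * a * b) with hcdef
  have hc2 : c ^ 2 = a ^ 2 + 2 * a * b := Real.sq_sqrt (by positivity)
  have hc : 0 < c := Real.sqrt_pos.mpr (by positivity)
  set A : ℝ := a + b + c with hAdef
  have hA : 0 < A := by positivity
  have hcab : c < a + b := by nlinarith
  have hb2 : b ^ 2 = (a + b - c) * A := by rw [hAdef]; nlinarith
  set B : ℝ := b / A with hBdef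
  have hB : 0 < B := div_pos hb hA
  have hB0 : B ≠ 0 := ne_of_gt hB
  have hAB : A * B = b := by rw [hBdef]; field_simp
  have hbB : b * B = a + b - c := by
    rw [hBdef]
    rw [div_eq_iff (ne_of_gt hA)] at *
    nlinarith [hb2]
  set sA : ℝ := Real.sqrt A with hsAdef
  have hsA : 0 < sA := Real.sqrt_pos.mpr hA
  have hsA0 : sA ≠ 0 := ne_of_gt hsA
  have hsA2 : sA ^ 2 = A := Real.sq_sqrt hA.le
  set μ : ℝ := Real.sqrt 2 * Real.sqrt (2 * c) with hμdef
  have hμ2 : μ ^ 2 = 4 * c := by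
    rw [hμdef, mul_pow, Real.sq_sqrt (by norm_num : (0:ℝ) ≤ 2),
      Real.sq_sqrt (by positivity : (0:ℝ) ≤ 2 * c)]
    ring
  set γ : ℝ := μ / sA with hγdef
  have hγ2 : γ ^ 2 = 4 * c / A := by
    rw [hγdef, div_pow, hμ2, hsA2]
  have hB2 : B ^ 2 = 1 - γ ^ 2 / 2 := by
    rw [hγ2, hBdef, div_pow]
    field_simp
    nlinarith [hb2]
  set w : ℝ := sA * (B * y) with hwdef
  set N : ℝ := ((2 ^ k * (k.factorial : ℝ) * Real.sqrt Real.pi) ^ (-(1 : ℝ) / 2)) with hNdef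
  set K : ℝ := (2 * c) ^ ((1 : ℝ) / 4) * N * (Real.sqrt 2) ^ k with hKdef
  -- pointwise identity for the integrand
  have hpoint : ∀ x : ℝ,
      Real.exp (-a * x ^ 2 - a * y ^ 2 - b * (x - y) ^ 2) * hermiteFun c k x
        = (K * Real.exp (-c * y ^ 2))
            * (Real.exp (-(sA * x - w) ^ 2) * (aeval (γ * (sA * x)) (hermite k) : ℝ)) := by
    intro x
    rw [hermiteFun, hermiteNorm_eq]
    have h1 : γ * (sA * x) = Real.sqrt 2 * (Real.sqrt (2 * c) * x) := by
      rw [hγdef, hμdef]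
      field_simp
    have h2 : (-a * x ^ 2 - a * y ^ 2 - b * (x - y) ^ 2) + -c * x ^ 2
        = -(sA * x - w) ^ 2 + -c * y ^ 2 := by
      rw [hwdef]
      linear_combination ((x - B * y) ^ 2) * hsA2 + (-2 * x * y + B * y ^ 2) * hAB
        + (y ^ 2) * hbB + (-x^2 + 2*B*x*y - B^2*y^2) * hAdef
    have h3 : Real.exp (-a * x ^ 2 - a * y ^ 2 - b * (x - y) ^ 2) * Real.exp (-c * x ^ 2)
        = Real.exp (-(sA * x - w) ^ 2) * Real.exp (-c * y ^ 2) := by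
      rw [← Real.exp_add, ← Real.exp_add, h2]
    rw [h1, hKdef]
    calc Real.exp (-a * x ^ 2 - a * y ^ 2 - b * (x - y) ^ 2)
          * ((2 * c) ^ ((1:ℝ)/4) * Real.exp (-c * x ^ 2)
            * (N * Real.sqrt 2 ^ k * (aeval (Real.sqrt 2 * (Real.sqrt (2 * c) * x)) (hermite k) : ℝ)))
        = (Real.exp (-a * x ^ 2 - a * y ^ 2 - b * (x - y) ^ 2) * Real.exp (-c * x ^ 2))
            * ((2 * c) ^ ((1:ℝ)/4) * N * Real.sqrt 2 ^ k
              * (aeval (Real.sqrt 2 * (Real.sqrt (2 * c) * x)) (hermite k) : ℝ)) := by ring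
      _ = _ := by rw [h3]; ring
  have hcongr : (∫ x : ℝ, Real.exp (-a * x ^ 2 - a * y ^ 2 - b * (x - y) ^ 2)
        * hermiteFun c k x)
      = ∫ x : ℝ, (K * Real.exp (-c * y ^ 2))
          * (Real.exp (-(sA * x - w) ^ 2) * (aeval (γ * (sA * x)) (hermite k) : ℝ)) :=
    integral_congr_ae (Filter.Eventually.of_forall hpoint)
  rw [hcongr, integral_const_mul]
  have hsub : (∫ x : ℝ, Real.exp (-(sA * x - w) ^ 2) * (aeval (γ * (sA * x)) (hermite k) : ℝ))
      = sA⁻¹ * ∫ u : ℝ, Real.exp (-(u - w) ^ 2) * (aeval (γ * u) (hermite k) : ℝ) := by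
    have h := MeasureTheory.Measure.integral_comp_mul_left
      (fun u : ℝ => Real.exp (-(u - w) ^ 2) * (aeval (γ * u) (hermite k) : ℝ)) sA
    rw [h, smul_eq_mul, abs_of_pos (inv_pos.mpr hsA)]
  rw [hsub, herm_int' γ B hB hB2 k w]
  have harg : γ * w / B = Real.sqrt 2 * (Real.sqrt (2 * c) * y) := by
    rw [hγdef, hwdef, hμdef]
    field_simp
  rw [harg]
  rw [hermiteFun, hermiteNorm_eq]
  have hπ : Real.sqrt (Real.pi / A) = Real.sqrt Real.pi / sA := by
    rw [Real.sqrt_div Real.pi_nonneg, hsAdef]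
  rw [hπ, hKdef]
  field_simp
  rw [hNdef]; ring_nf

end MySE

/-- Eigen-relation for the modified square exponential kernel
`κ(s,s') = exp(-a‖s‖² - a‖s'‖² - b‖s-s'‖²)` on `ℝ^d`: with `c = √(a²+2ab)`,
`A = a + b + c` and `B = b/A`, the product of Hermite eigenfunctions
`∏ᵢ h_{αᵢ}(sᵢ)` is an eigenfunction with eigenvalue `(π/A)^{d/2} B^{|α|}`, i.e.
`∫_{ℝ^d} κ(s,s') ∏ᵢ h_{αᵢ}(sᵢ) ds = (π/A)^{d/2} B^{|α|} ∏ᵢ h_{αᵢ}(s'ᵢ)`. -/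
theorem modified_se_kernel_eigen (a b : ℝ) (ha : 0 < a) (hb : 0 < b)
    (d : ℕ) (hd : 1 ≤ d) (α : Fin d → ℕ) (s' : Fin d → ℝ) :
    (∫ s : Fin d → ℝ,
        Real.exp (-a * (∑ i, (s i) ^ 2) - a * (∑ i, (s' i) ^ 2)
            - b * (∑ i, (s i - s' i) ^ 2)) *
          ∏ i, hermiteFun (Real.sqrt (a ^ 2 + 2 * a * b)) (α i) (s i))
      = (Real.pi / (a + b + Real.sqrt (a ^ 2 + 2 * a * b))) ^ ((d : ℝ) / 2) *
          (b / (a + b + Real.sqrt (a ^ 2 + 2 * a * b))) ^ (∑ i, α i) *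
          ∏ i, hermiteFun (Real.sqrt (a ^ 2 + 2 * a * b)) (α i) (s' i) := by
  set c : ℝ := Real.sqrt (a ^ 2 + 2 * a * b) with hcdef
  set A : ℝ := a + b + c with hAdef
  have hA : 0 < A := by
    have : 0 ≤ c := Real.sqrt_nonneg _
    positivity
  have h1 : ∀ s : Fin d → ℝ,
      Real.exp (-a * (∑ i, (s i) ^ 2) - a * (∑ i, (s' i) ^ 2) - b * (∑ i, (s i - s' i) ^ 2)) *
          ∏ i, hermiteFun c (α i) (s i)
        = ∏ i, (Real.exp (-a * (s i) ^ 2 - a * (s' i) ^ 2 - b * (s i - s' i) ^ 2)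
            * hermiteFun c (α i) (s i)) := by
    intro s
    rw [Finset.prod_mul_distrib, ← Real.exp_sum]
    congr 2
    rw [Finset.mul_sum, Finset.mul_sum, Finset.mul_sum, ← Finset.sum_sub_distrib,
      ← Finset.sum_sub_distrib]
  rw [integral_congr_ae (Filter.Eventually.of_forall h1)]
  rw [MeasureTheory.volume_pi]
  rw [MeasureTheory.integral_fintype_prod_eq_prod
    (fun i x => Real.exp (-a * x ^ 2 - a * (s' i) ^ 2 - b * (x - s' i) ^ 2)
      * hermiteFun c (α i) x)]
  have h2 : ∀ i : Fin d,
      (∫ x : ℝ, Real.exp (-a * x ^ 2 - a * (s' i) ^ 2 - b * (x - s' i) ^ 2)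
          * hermiteFun c (α i) x)
        = Real.sqrt (Real.pi / A) * (b / A) ^ (α i) * hermiteFun c (α i) (s' i) := fun i =>
    MySE.oneD a b ha hb (α i) (s' i)
  rw [Finset.prod_congr rfl (fun i _ => h2 i), Finset.prod_mul_distrib,
    Finset.prod_mul_distrib, Finset.prod_const, Finset.prod_pow_eq_pow_sum,
    Finset.card_univ, Fintype.card_fin]
  have h3 : Real.sqrt (Real.pi / A) ^ d = (Real.pi / A) ^ ((d : ℝ) / 2) := by
    rw [Real.sqrt_eq_rpow, ← Real.rpow_natCast ((Real.pi / A) ^ ((1:ℝ)/2)) d,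
      ← Real.rpow_mul (by positivity)]
    congr 1
    push_cast
    ring
  rw [h3]
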